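/- Let Ω ⊂ ℝ² be the open triangle with vertices A(−1/2, 1/2), B(1/2, 1/2), C(1/2, 3/2), and define z(x,y) = 1 − 2y/(1 + √(1+4xy)). Then ∫∫_Ω (∂z/∂x(x,y))² dx dy ≤ ∫_{1/2}^{3/2} 4y³ (ln(1+2y) − 2 ln(2y−1)) dy < +∞, and moreover ∫∫_Ω (∂z/∂y(x,y))² dx dy < +∞. -/

import Mathlib

open MeasureTheory Set Real

/-- The open triangle with vertices A(−1/2,1/2), B(1/2,1/2), C(1/2,3/2):
its sides lie on the lines y = 1/2, x = 1/2 and y = x + 1. -/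
def TriangleEx3 : Set (ℝ × ℝ) :=
  {p : ℝ × ℝ | 1/2 < p.2 ∧ p.1 < 1/2 ∧ p.2 < p.1 + 1}

/-- The explicit solution z(x,y) = 1 − 2y/(1 + √(1+4xy)) of Example 3. -/
noncomputable def zEx3 : ℝ × ℝ → ℝ := fun p =>
  1 - 2 * p.2 / (1 + Real.sqrt (1 + 4 * p.1 * p.2))

/-- Partial derivative ∂z/∂x. -/
noncomputable def zEx3x (p : ℝ × ℝ) : ℝ := deriv (fun t => zEx3 (t, p.2)) p.1

/-- Partial derivative ∂z/∂y. -/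
noncomputable def zEx3y (p : ℝ × ℝ) : ℝ := deriv (fun t => zEx3 (p.1, t)) p.2

/-! ### Auxiliary lemmas -/

lemma hasDerivAt_zx (x y : ℝ) (h : 0 < 1 + 4 * x * y) :
    HasDerivAt (fun t => zEx3 (t, y))
      (4 * y ^ 2 / (Real.sqrt (1 + 4 * x * y) * (1 + Real.sqrt (1 + 4 * x * y)) ^ 2)) x := by
  set s := Real.sqrt (1 + 4 * x * y) with hs_def
  have hs : 0 < s := Real.sqrt_pos.mpr h
  have hs2 : s ^ 2 = 1 + 4 * x * y := Real.sq_sqrt h.le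
  have hne : (1 : ℝ) + s ≠ 0 := by positivity
  have h1 : HasDerivAt (fun t : ℝ => 1 + 4 * t * y) (4 * y) x := by
    simpa using ((((hasDerivAt_id x).const_mul (4:ℝ)).mul_const y).const_add 1)
  have hsq : HasDerivAt (fun t : ℝ => Real.sqrt (1 + 4 * t * y)) (4 * y / (2 * s)) x :=
    h1.sqrt h.ne'
  have hden : HasDerivAt (fun t : ℝ => 1 + Real.sqrt (1 + 4 * t * y)) (4 * y / (2 * s)) x :=
    hsq.const_add 1
  have hdiv : HasDerivAt (fun t : ℝ => 2 * y / (1 + Real.sqrt (1 + 4 * t * y)))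
      ((0 * (1 + s) - 2 * y * (4 * y / (2 * s))) / (1 + s) ^ 2) x :=
    (hasDerivAt_const x (2 * y)).div hden hne
  have hfin := (hasDerivAt_const x (1:ℝ)).sub hdiv
  simp only [zEx3]
  refine HasDerivAt.congr_deriv hfin ?_
  field_simp
  ring

lemma hasDerivAt_zy (x y : ℝ) (h : 0 < 1 + 4 * x * y) :
    HasDerivAt (fun t => zEx3 (x, t)) (-(1 / Real.sqrt (1 + 4 * x * y))) y := by
  set s := Real.sqrt (1 + 4 * x * y) with hs_def
  have hs : 0 < s := Real.sqrt_pos.mpr h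
  have hs2 : s ^ 2 = 1 + 4 * x * y := Real.sq_sqrt h.le
  have hne : (1 : ℝ) + s ≠ 0 := by positivity
  have h1 : HasDerivAt (fun t : ℝ => 1 + 4 * x * t) (4 * x) y := by
    simpa using (((hasDerivAt_id y).const_mul (4 * x : ℝ)).const_add 1)
  have hsq : HasDerivAt (fun t : ℝ => Real.sqrt (1 + 4 * x * t)) (4 * x / (2 * s)) y :=
    h1.sqrt h.ne'
  have hden : HasDerivAt (fun t : ℝ => 1 + Real.sqrt (1 + 4 * x * t)) (4 * x / (2 * s)) y :=
    hsq.const_add 1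
  have hnum : HasDerivAt (fun t : ℝ => 2 * t) (2 : ℝ) y := by
    simpa using ((hasDerivAt_id y).const_mul (2:ℝ))
  have hdiv : HasDerivAt (fun t : ℝ => 2 * t / (1 + Real.sqrt (1 + 4 * x * t)))
      ((2 * (1 + s) - 2 * y * (4 * x / (2 * s))) / (1 + s) ^ 2) y :=
    hnum.div hden hne
  have hfin := (hasDerivAt_const y (1:ℝ)).sub hdiv
  simp only [zEx3]
  refine HasDerivAt.congr_deriv hfin ?_
  have hy4 : 4 * x * y = s ^ 2 - 1 := by linarith
  field_simp
  nlinarith [hs2, hs, hne]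

lemma logInt02 : IntervalIntegrable Real.log volume 0 2 := by
  rw [intervalIntegrable_iff_integrableOn_Ioc_of_le (by norm_num)]
  have hb : IntegrableOn (fun x : ℝ => 2 * x ^ (-(1/2) : ℝ)) (Ioc 0 2) volume := by
    have h0 := intervalIntegral.intervalIntegrable_rpow' (a := 0) (b := 2)
      (show (-1:ℝ) < -(1/2) by norm_num)
    exact ((intervalIntegrable_iff_integrableOn_Ioc_of_le (by norm_num)).1 h0).const_mul 2
  apply Integrable.mono' hb Real.measurable_log.aestronglyMeasurable
  rw [ae_restrict_iff' measurableSet_Ioc]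
  refine ae_of_all _ fun x hx => ?_
  obtain ⟨hx0, hx2⟩ := hx
  have hsx : 0 < Real.sqrt x := Real.sqrt_pos.2 hx0
  have hrw : x ^ (-(1/2) : ℝ) = (Real.sqrt x)⁻¹ := by
    rw [Real.rpow_neg hx0.le, ← Real.sqrt_eq_rpow]
  rw [hrw, Real.norm_eq_abs]
  have hsq : Real.sqrt x ^ 2 = x := Real.sq_sqrt hx0.le
  rcases le_or_gt 1 x with h1 | h1
  · rw [abs_of_nonneg (Real.log_nonneg h1)]
    have hle := Real.log_le_sub_one_of_pos hx0
    have hs2 : Real.sqrt x ≤ 2 := by nlinarith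
    have h2i : (1:ℝ)/2 ≤ (Real.sqrt x)⁻¹ := by
      rw [div_le_iff₀ (by norm_num), inv_mul_eq_div, le_div_iff₀ hsx]
      linarith
    nlinarith
  · rw [abs_of_nonpos (Real.log_nonpos hx0.le h1.le)]
    have hlx : Real.log x = 2 * Real.log (Real.sqrt x) := by
      rw [Real.log_sqrt hx0.le]; ring
    have hinv : Real.log (Real.sqrt x)⁻¹ ≤ (Real.sqrt x)⁻¹ - 1 :=
      Real.log_le_sub_one_of_pos (by positivity)
    rw [Real.log_inv] at hinv
    have hpos : 0 < (Real.sqrt x)⁻¹ := by positivity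
    nlinarith

/-- The one-dimensional majorant function. -/
noncomputable def gEx (y : ℝ) : ℝ :=
  4 * y ^ 3 * (Real.log (1 + 2 * y) - 2 * Real.log (2 * y - 1))

lemma gInt : IntervalIntegrable gEx volume (1/2) (3/2) := by
  have h2 : IntervalIntegrable (fun y : ℝ => Real.log (2 * y - 1)) volume (1/2) (3/2) := by
    have ha := logInt02.comp_sub_right 1
    norm_num at ha
    have hb := ha.comp_mul_left (c := 2)
    norm_num at hb
    exact hb
  have t2 : IntervalIntegrable (fun y : ℝ => (4 * y ^ 3 * 2) * Real.log (2 * y - 1))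
      volume (1/2) (3/2) :=
    h2.continuousOn_mul (by fun_prop)
  have t1 : IntervalIntegrable (fun y : ℝ => 4 * y ^ 3 * Real.log (1 + 2 * y))
      volume (1/2) (3/2) := by
    apply ContinuousOn.intervalIntegrable
    apply ContinuousOn.mul (by fun_prop)
    apply ContinuousOn.log (by fun_prop)
    intro y hy
    rw [uIcc_of_le (by norm_num)] at hy
    nlinarith [hy.1]
  have heq : gEx
      = (fun y : ℝ => 4 * y ^ 3 * Real.log (1 + 2 * y))
        - (fun y : ℝ => (4 * y ^ 3 * 2) * Real.log (2 * y - 1)) := by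
    funext y; simp [gEx, Pi.sub_apply]; ring
  rw [heq]
  exact t1.sub t2

lemma inner_eq (y : ℝ) (hy : y ∈ Ioo (1/2 : ℝ) (3/2)) :
    ∫⁻ x in Ioo (y - 1) (1/2), ENNReal.ofReal (16 * y ^ 4 / (1 + 4 * x * y)) =
      ENNReal.ofReal (gEx y) := by
  obtain ⟨hy1, hy2⟩ := hy
  have hle : y - 1 ≤ 1/2 := by linarith
  have hpos : ∀ x ∈ Icc (y - 1) (1/2 : ℝ), 0 < 1 + 4 * x * y := by
    rintro x ⟨hxl, hxr⟩
    nlinarith [sq_nonneg (2 * y - 1),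
      mul_nonneg (by linarith : (0:ℝ) ≤ x - (y - 1)) (by linarith : (0:ℝ) ≤ 4 * y)]
  have hcont : ContinuousOn (fun x : ℝ => 16 * y ^ 4 / (1 + 4 * x * y)) (Icc (y - 1) (1/2)) := by
    apply ContinuousOn.div (by fun_prop) (by fun_prop)
    exact fun x hx => (hpos x hx).ne'
  have hInt : IntervalIntegrable (fun x : ℝ => 16 * y ^ 4 / (1 + 4 * x * y)) volume (y - 1) (1/2) :=
    hcont.intervalIntegrable_of_Icc hle
  have hderiv : ∀ x ∈ uIcc (y - 1) (1/2 : ℝ),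
      HasDerivAt (fun x : ℝ => 4 * y ^ 3 * Real.log (1 + 4 * x * y))
        (16 * y ^ 4 / (1 + 4 * x * y)) x := by
    intro x hx
    rw [uIcc_of_le hle] at hx
    have hp := hpos x hx
    have h1 : HasDerivAt (fun t : ℝ => 1 + 4 * t * y) (4 * y) x := by
      simpa using ((((hasDerivAt_id x).const_mul (4:ℝ)).mul_const y).const_add 1)
    have := (h1.log hp.ne').const_mul (4 * y ^ 3)
    refine HasDerivAt.congr_deriv this ?_
    field_simp
    ring
  have hivi := intervalIntegral.integral_eq_sub_of_hasDerivAt hderiv hInt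
  have hval : ∫ x in (y - 1)..(1/2 : ℝ), 16 * y ^ 4 / (1 + 4 * x * y) = gEx y := by
    rw [hivi]
    have e1 : 1 + 4 * (1/2 : ℝ) * y = 1 + 2 * y := by ring
    have e2 : 1 + 4 * (y - 1) * y = (2 * y - 1) ^ 2 := by ring
    rw [e1, e2, Real.log_pow, gEx]
    push_cast
    ring
  have hnn : 0 ≤ᵐ[volume.restrict (Ioo (y - 1) (1/2 : ℝ))]
      fun x : ℝ => 16 * y ^ 4 / (1 + 4 * x * y) := by
    filter_upwards [ae_restrict_mem measurableSet_Ioo] with x hx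
    have := hpos x (Ioo_subset_Icc_self hx)
    positivity
  have hInt' : IntegrableOn (fun x : ℝ => 16 * y ^ 4 / (1 + 4 * x * y))
      (Ioo (y - 1) (1/2)) volume :=
    ((intervalIntegrable_iff_integrableOn_Ioc_of_le hle).1 hInt).mono_set Ioo_subset_Ioc_self
  rw [← ofReal_integral_eq_lintegral_ofReal hInt' hnn]
  congr 1
  rw [← integral_Ioc_eq_integral_Ioo, ← intervalIntegral.integral_of_le hle, hval]

/-- The two-dimensional majorant function. -/
noncomputable def FEx : ℝ × ℝ → ENNReal := fun p =>
  ENNReal.ofReal (16 * p.2 ^ 4 / (1 + 4 * p.1 * p.2))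

lemma FEx_meas : Measurable FEx := by
  apply ENNReal.measurable_ofReal.comp
  fun_prop

lemma triangle_meas : MeasurableSet TriangleEx3 := by
  have h : TriangleEx3 = {p : ℝ × ℝ | 1/2 < p.2} ∩
      ({p : ℝ × ℝ | p.1 < 1/2} ∩ {p : ℝ × ℝ | p.2 < p.1 + 1}) := by
    ext p; simp [TriangleEx3, and_assoc]
  rw [h]
  exact (measurableSet_lt measurable_const measurable_snd).inter
    ((measurableSet_lt measurable_fst measurable_const).inter
      (measurableSet_lt measurable_snd (measurable_fst.add measurable_const)))

lemma tri_mem (x y : ℝ) :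
    (x, y) ∈ TriangleEx3 ↔ y ∈ Ioo (1/2 : ℝ) (3/2) ∧ x ∈ Ioo (y - 1) (1/2) := by
  simp only [TriangleEx3, mem_setOf_eq, mem_Ioo]
  constructor
  · rintro ⟨h1, h2, h3⟩; exact ⟨⟨h1, by linarith⟩, by linarith, h2⟩
  · rintro ⟨⟨h1, h2⟩, h3, h4⟩; exact ⟨h1, h4, by linarith⟩

lemma master : ∫⁻ p in TriangleEx3, FEx p =
    ENNReal.ofReal (∫ y in (1/2 : ℝ)..(3/2 : ℝ), gEx y) := by
  rw [← lintegral_indicator triangle_meas]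
  rw [Measure.volume_eq_prod]
  rw [lintegral_prod_symm _ ((FEx_meas.indicator triangle_meas).aemeasurable)]
  have step : ∀ y : ℝ, (∫⁻ x, TriangleEx3.indicator FEx (x, y)) =
      (Ioo (1/2 : ℝ) (3/2)).indicator (fun y' => ENNReal.ofReal (gEx y')) y := by
    intro y
    by_cases hy : y ∈ Ioo (1/2 : ℝ) (3/2)
    · rw [indicator_of_mem hy]
      have hfun : (fun x => TriangleEx3.indicator FEx (x, y)) =
          (Ioo (y - 1) (1/2)).indicator (fun x => FEx (x, y)) := by
        funext x
        by_cases hx : x ∈ Ioo (y - 1) (1/2)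
        · rw [indicator_of_mem hx, indicator_of_mem ((tri_mem x y).2 ⟨hy, hx⟩)]
        · rw [indicator_of_notMem hx, indicator_of_notMem
            (fun hmem => hx ((tri_mem x y).1 hmem).2)]
      rw [hfun, lintegral_indicator measurableSet_Ioo]
      exact inner_eq y hy
    · rw [indicator_of_notMem hy]
      have hfun : (fun x => TriangleEx3.indicator FEx (x, y)) = fun _ => 0 := by
        funext x
        exact indicator_of_notMem (fun hmem => hy ((tri_mem x y).1 hmem).1) _
      rw [hfun, lintegral_const, zero_mul]
  simp_rw [step]
  rw [lintegral_indicator measurableSet_Ioo]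
  have hIntOn : IntegrableOn gEx (Ioo (1/2 : ℝ) (3/2)) volume :=
    ((intervalIntegrable_iff_integrableOn_Ioc_of_le (by norm_num)).1 gInt).mono_set
      Ioo_subset_Ioc_self
  have hnn : 0 ≤ᵐ[volume.restrict (Ioo (1/2 : ℝ) (3/2))] gEx := by
    filter_upwards [ae_restrict_mem measurableSet_Ioo] with y hy
    obtain ⟨h1, h2⟩ := hy
    have hp : (0:ℝ) < 2 * y - 1 := by linarith
    have hlog : 2 * Real.log (2 * y - 1) ≤ Real.log (1 + 2 * y) := by
      have hl : Real.log ((2 * y - 1) ^ 2) = 2 * Real.log (2 * y - 1) := by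
        rw [Real.log_pow]; push_cast; ring
      rw [← hl]
      apply Real.log_le_log (by positivity)
      nlinarith
    have h3 : (0:ℝ) ≤ 4 * y ^ 3 := by positivity
    simp only [Pi.zero_apply]
    unfold gEx
    exact mul_nonneg h3 (by linarith)
  rw [← ofReal_integral_eq_lintegral_ofReal hIntOn hnn]
  congr 1
  rw [intervalIntegral.integral_of_le (by norm_num), integral_Ioc_eq_integral_Ioo]

lemma tri_pos {p : ℝ × ℝ} (hp : p ∈ TriangleEx3) : 0 < 1 + 4 * p.1 * p.2 := by
  obtain ⟨h1, h2, h3⟩ := hp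
  nlinarith [sq_nonneg (2 * p.2 - 1),
    mul_pos (show (0:ℝ) < p.1 - (p.2 - 1) by linarith) (show (0:ℝ) < 4 * p.2 by linarith)]

lemma bound_x {p : ℝ × ℝ} (hp : p ∈ TriangleEx3) :
    ENNReal.ofReal ((zEx3x p) ^ 2) ≤ FEx p := by
  obtain ⟨x, y⟩ := p
  have h := tri_pos hp
  simp only at h
  set s := Real.sqrt (1 + 4 * x * y) with hs_def
  have hs : 0 < s := Real.sqrt_pos.mpr h
  have hs2 : s ^ 2 = 1 + 4 * x * y := Real.sq_sqrt h.le
  have hd : zEx3x (x, y) = 4 * y ^ 2 / (s * (1 + s) ^ 2) := (hasDerivAt_zx x y h).deriv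
  apply ENNReal.ofReal_le_ofReal
  rw [hd]
  show (4 * y ^ 2 / (s * (1 + s) ^ 2)) ^ 2 ≤ 16 * y ^ 4 / (1 + 4 * x * y)
  rw [← hs2, div_pow, div_le_div_iff₀ (by positivity) (by positivity)]
  have h14 : (1:ℝ) ≤ (1 + s) ^ 4 := one_le_pow₀ (by linarith)
  nlinarith [mul_le_mul_of_nonneg_left h14 (show (0:ℝ) ≤ 16 * y ^ 4 * s ^ 2 by positivity)]

lemma bound_y {p : ℝ × ℝ} (hp : p ∈ TriangleEx3) :
    ENNReal.ofReal ((zEx3y p) ^ 2) ≤ FEx p := by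
  obtain ⟨x, y⟩ := p
  have h := tri_pos hp
  simp only at h
  have hy1 : 1/2 < y := hp.1
  set s := Real.sqrt (1 + 4 * x * y) with hs_def
  have hs : 0 < s := Real.sqrt_pos.mpr h
  have hs2 : s ^ 2 = 1 + 4 * x * y := Real.sq_sqrt h.le
  have hd : zEx3y (x, y) = -(1 / s) := (hasDerivAt_zy x y h).deriv
  apply ENNReal.ofReal_le_ofReal
  rw [hd]
  show (-(1 / s)) ^ 2 ≤ 16 * y ^ 4 / (1 + 4 * x * y)
  have he : (-(1 / s)) ^ 2 = 1 / (1 + 4 * x * y) := by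
    rw [neg_pow, ← hs2]; field_simp
  rw [he]
  have h16 : (1:ℝ) ≤ 16 * y ^ 4 := by
    have h1 : (0:ℝ) < 4 * y ^ 2 - 1 := by nlinarith
    nlinarith [mul_pos h1 (show (0:ℝ) < 4 * y ^ 2 + 1 by positivity)]
  gcongr

theorem stmt_3 :
    (∫⁻ p in TriangleEx3, ENNReal.ofReal ((zEx3x p) ^ 2) ≤
      ENNReal.ofReal (∫ y in (1/2 : ℝ)..(3/2 : ℝ),
        4 * y ^ 3 * (Real.log (1 + 2 * y) - 2 * Real.log (2 * y - 1)))) ∧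
    IntervalIntegrable
      (fun y : ℝ => 4 * y ^ 3 * (Real.log (1 + 2 * y) - 2 * Real.log (2 * y - 1)))
      volume (1/2) (3/2) ∧
    (∫⁻ p in TriangleEx3, ENNReal.ofReal ((zEx3y p) ^ 2) < ⊤) := by
  have hmx : ∫⁻ p in TriangleEx3, ENNReal.ofReal ((zEx3x p) ^ 2) ≤
      ENNReal.ofReal (∫ y in (1/2 : ℝ)..(3/2 : ℝ), gEx y) :=
    (setLIntegral_mono FEx_meas fun p hp => bound_x hp).trans master.le
  have hmy : ∫⁻ p in TriangleEx3, ENNReal.ofReal ((zEx3y p) ^ 2) ≤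
      ENNReal.ofReal (∫ y in (1/2 : ℝ)..(3/2 : ℝ), gEx y) :=
    (setLIntegral_mono FEx_meas fun p hp => bound_y hp).trans master.le
  refine ⟨hmx, gInt, lt_of_le_of_lt hmy ENNReal.ofReal_lt_top⟩
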